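/- arXiv:2103.12839 — 4 statements merged into one kernel-verified Lean document; each statement's English description precedes it below -/
import Mathlib

section
/- Majorant for negative powers: let f = 1 + Σ_{l≥1} f_l t^l ∈ ℝ[[t]] and f̄ = 1 + Σ_{l≥1} f̄_l t^l ∈ ℝ₊[[t]] with f ⊴ f̄, and let ν < 0. Then f^ν ⊴ (2 − f̄)^ν, i.e. the formal power series f^ν (defined via the recurrence p_k = (1/k) Σ_{j=0}^{k−1} ((k−j)ν − j) f_{k−j} p_j, p_0 = 1) is majored coefficientwise by (2 − f̄)^ν. In particular all coefficients of (2 − f̄)^ν are nonnegative. -/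
/-- `p` is the formal power series `g^ν` for a power series `g` with constant term 1,
defined through the recurrence `p_k = (1/k) Σ_{j<k} ((k-j)ν − j) g_{k-j} p_j`, `p_0 = 1`
(equivalent to the formal ODE `p'·g = ν·p·g'`). -/
def IsFPow (g p : ℕ → ℝ) (ν : ℝ) : Prop :=
  p 0 = 1 ∧ ∀ k : ℕ, 1 ≤ k →
    p k = (1 / (k : ℝ)) *
      ∑ j ∈ Finset.range k, ((((k - j : ℕ) : ℝ)) * ν - (j : ℝ)) * g (k - j) * p j

/-- Majorant for negative powers: if `f = 1 + Σ f_l t^l ⊴ fb = 1 + Σ fb_l t^l`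
and `ν < 0`, then `f^ν ⊴ (2 − fb)^ν`. Here `p = f^ν` and `pb = (2 − fb)^ν`, the
latter via its base series with coefficients `1, −fb_1, −fb_2, …`. -/
theorem majorant_neg_fpow (f fb p pb : ℕ → ℝ) (ν : ℝ) (hν : ν < 0)
    (hf0 : f 0 = 1) (hfb0 : fb 0 = 1)
    (hmaj : ∀ k, |f k| ≤ fb k)
    (hp : IsFPow f p ν)
    (hpb : IsFPow (fun k => if k = 0 then 1 else -fb k) pb ν) :
    ∀ k, |p k| ≤ pb k := by
  obtain ⟨hp0, hpr⟩ := hp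
  obtain ⟨hpb0, hpbr⟩ := hpb
  intro k
  induction k using Nat.strong_induction_on with
  | _ k ih =>
    rcases Nat.eq_zero_or_pos k with rfl | hk
    · simp [hp0, hpb0]
    · rw [hpr k hk, hpbr k hk]
      have hkpos : (0:ℝ) < k := by exact_mod_cast hk
      rw [abs_mul, abs_of_pos (by positivity : (0:ℝ) < 1/(k:ℝ))]
      apply mul_le_mul_of_nonneg_left _ (by positivity)
      calc |∑ j ∈ Finset.range k, ((((k-j:ℕ):ℝ)) * ν - j) * f (k-j) * p j|
          ≤ ∑ j ∈ Finset.range k, |((((k-j:ℕ):ℝ)) * ν - j) * f (k-j) * p j| :=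
            Finset.abs_sum_le_sum_abs _ _
        _ ≤ ∑ j ∈ Finset.range k,
              ((((k-j:ℕ):ℝ)) * ν - j) * (if k-j = 0 then 1 else -fb (k-j)) * pb j := by
            apply Finset.sum_le_sum
            intro j hj
            have hj' := Finset.mem_range.mp hj
            have hne : k - j ≠ 0 := Nat.sub_ne_zero_of_lt hj'
            rw [if_neg hne]
            have h1le : (1:ℝ) ≤ ((k-j:ℕ):ℝ) := by
              exact_mod_cast Nat.one_le_iff_ne_zero.mpr hne
            have hcoef : (((k-j:ℕ):ℝ)) * ν - j ≤ 0 := by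
              nlinarith [Nat.cast_nonneg (α := ℝ) j]
            have heq : ((((k-j:ℕ):ℝ)) * ν - j) * -fb (k-j) * pb j
                = |(((k-j:ℕ):ℝ)) * ν - j| * (fb (k-j) * pb j) := by
              rw [abs_of_nonpos hcoef]; ring
            rw [heq, abs_mul, abs_mul, mul_assoc]
            refine mul_le_mul_of_nonneg_left ?_ (abs_nonneg _)
            have hpbj := ih j hj'
            have hfbj := hmaj (k-j)
            exact mul_le_mul hfbj hpbj (abs_nonneg _) ((abs_nonneg _).trans hfbj)
end

section
/- Majorant for the gravitational acceleration (Lemma 3.1): Let q_1,…,q_N ∈ ℝ³[[t]] be the formal power series solution of the N-body equations with initial positions q_i⁰ satisfying q_i⁰ ≠ q_j⁰ for i ≠ j. Suppose ρ = 1 + Σ_{k≥1} ρ_k t^k ∈ ℝ₊[[t]] satisfies q_i − q_j ⊴ ‖q_i⁰ − q_j⁰‖·ρ for all 1 ≤ i < j ≤ N. Then for each i, g_i(q) := Σ_{j≠i} G m_j ‖q_i − q_j‖⁻³ (q_j − q_i) satisfies g_i(q) ⊴ K_i(q⁰)·ρ·(2 − ρ²)^{−3/2}, where K_i(q⁰)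 = Σ_{j≠i} G m_j / ‖q_i⁰ − q_j⁰‖². -/
open scoped RealInnerProductSpace
open Finset

noncomputable section

/-- Cauchy product of two scalar power series (coefficientwise). -/
def cauchy (a b : ℕ → ℝ) (k : ℕ) : ℝ := ∑ j ∈ Finset.range (k + 1), a j * b (k - j)

/-- `K_i(q⁰) = Σ_{j≠i} G m_j / ‖q_i⁰ − q_j⁰‖²`. -/
def Kcoef {N : ℕ} (G : ℝ) (m : Fin N → ℝ) (q0 : Fin N → EuclideanSpace ℝ (Fin 3))
    (i : Fin N) : ℝ :=
  ∑ j ∈ Finset.univ.erase i, G * m j / ‖q0 i - q0 j‖ ^ 2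

lemma cauchy_comm (a b : ℕ → ℝ) (k : ℕ) : cauchy a b k = cauchy b a k := by
  unfold cauchy
  rw [← Finset.sum_range_reflect]
  apply Finset.sum_congr rfl
  intro j hj
  simp only [Finset.mem_range] at hj
  have h1 : k + 1 - 1 - j = k - j := by omega
  have h2 : k - (k - j) = j := by omega
  rw [h1, h2, mul_comm]

/-- Majorization lemma for formal powers with exponent `-3/2`. -/
lemma pow_maj (g h p P : ℕ → ℝ)
    (hg : IsFPow g p (-(3 / 2))) (hh : IsFPow h P (-(3 / 2)))
    (hgh : ∀ k, 1 ≤ k → |g k| ≤ -h k) :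
    ∀ k, |p k| ≤ P k ∧ 0 ≤ P k := by
  intro k
  induction k using Nat.strong_induction_on with
  | _ k ih =>
    match k with
    | 0 => simp [hg.1, hh.1]
    | (n + 1) =>
      set k := n + 1 with hkdef
      have hk : 1 ≤ k := Nat.le_add_left 1 n
      have key : ∀ j ∈ Finset.range k,
          |((((k - j : ℕ) : ℝ)) * (-(3/2)) - (j : ℝ)) * g (k - j) * p j|
            ≤ ((((k - j : ℕ) : ℝ)) * (-(3/2)) - (j : ℝ)) * h (k - j) * P j ∧
          0 ≤ ((((k - j : ℕ) : ℝ)) * (-(3/2)) - (j : ℝ)) * h (k - j) * P j := by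
        intro j hj
        simp only [Finset.mem_range] at hj
        have h1 : 1 ≤ k - j := by omega
        have hc1 : (1 : ℝ) ≤ ((k - j : ℕ) : ℝ) := by exact_mod_cast h1
        have hjnn : (0 : ℝ) ≤ (j : ℝ) := Nat.cast_nonneg j
        have hc : ((((k - j : ℕ) : ℝ)) * (-(3/2)) - (j : ℝ)) ≤ 0 := by nlinarith
        have hh1 := hgh (k - j) h1
        have hhneg : 0 ≤ -h (k - j) := le_trans (abs_nonneg _) hh1
        obtain ⟨hpj, hPj⟩ := ih j (by omega)
        have hApos : 0 ≤ -((((k - j : ℕ) : ℝ)) * (-(3/2)) - (j : ℝ)) := by linarith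
        have e : ((((k - j : ℕ) : ℝ)) * (-(3/2)) - (j : ℝ)) * h (k - j) * P j
            = (-((((k - j : ℕ) : ℝ)) * (-(3/2)) - (j : ℝ))) * (-h (k - j)) * P j := by ring
        constructor
        · rw [e, abs_mul, abs_mul, abs_of_nonpos hc]
          have hPnn : (0:ℝ) ≤ |p j| := abs_nonneg _
          apply mul_le_mul
          · exact mul_le_mul_of_nonneg_left hh1 hApos
          · exact hpj
          · exact abs_nonneg _
          · positivity
        · rw [e]; positivity
      have hpk := hg.2 k hk
      have hPk := hh.2 k hk
      have hkR : (0:ℝ) < (k : ℝ) := by exact_mod_cast hk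
      constructor
      · rw [hpk, hPk, abs_mul, abs_of_nonneg (by positivity : (0:ℝ) ≤ 1 / (k:ℝ))]
        apply mul_le_mul_of_nonneg_left _ (by positivity : (0:ℝ) ≤ 1 / (k:ℝ))
        refine (Finset.abs_sum_le_sum_abs _ _).trans ?_
        exact Finset.sum_le_sum fun j hj => (key j hj).1
      · rw [hPk]
        apply mul_nonneg (by positivity)
        exact Finset.sum_nonneg fun j hj => (key j hj).2


/-- Majorant for the gravitational acceleration (Lemma 3.1): if the formal power
series solution `(q,v)` of the N-body equations satisfies
`q_i − q_j ⊴ ‖q_i⁰ − q_j⁰‖ ρ` for all `i < j`, with `ρ = 1 + Σ_{k≥1} ρ_k t^k ∈ ℝ₊[[t]]`,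
then `g_i(q) ⊴ K_i(q⁰)·ρ·(2 − ρ²)^{−3/2}`. Here `q i`, `v i`, `gser i` are the
coefficient series of positions, velocities and accelerations; `w i j` is the series
`(‖q_i − q_j‖²/‖q_i⁰ − q_j⁰‖²)^{−3/2}` and `P` is the series `(2 − ρ²)^{−3/2}`. -/
theorem majorant_gravity {N : ℕ} (G : ℝ) (m : Fin N → ℝ)
    (q v gser : Fin N → ℕ → EuclideanSpace ℝ (Fin 3))
    (w : Fin N → Fin N → ℕ → ℝ) (ρ P : ℕ → ℝ)
    (hG : 0 < G) (hm : ∀ j, 0 < m j)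
    (hsep : ∀ i j : Fin N, i ≠ j → q i 0 ≠ q j 0)
    -- `w i j = (‖q_i − q_j‖²/‖q_i⁰ − q_j⁰‖²)^{−3/2}` as a formal power series
    (hw : ∀ i j : Fin N, i ≠ j →
      IsFPow (fun k =>
        (∑ a ∈ Finset.range (k + 1),
          ⟪q i a - q j a, q i (k - a) - q j (k - a)⟫) / ‖q i 0 - q j 0‖ ^ 2)
        (w i j) (-(3 / 2)))
    -- `gser i` is the coefficient series of `g_i(q) = Σ_{j≠i} G m_j ‖q_i−q_j‖⁻³ (q_j−q_i)`
    (hgser : ∀ i k, gser i k =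
      ∑ j ∈ Finset.univ.erase i, (G * m j / ‖q i 0 - q j 0‖ ^ 3) •
        (∑ a ∈ Finset.range (k + 1), w i j a • (q j (k - a) - q i (k - a))))
    -- `(q, v)` is the formal power series solution of the N-body equations
    (hODEq : ∀ i, ∀ k : ℕ, ((k : ℝ) + 1) • q i (k + 1 : ℕ) = v i k)
    (hODEv : ∀ i, ∀ k : ℕ, ((k : ℝ) + 1) • v i (k + 1 : ℕ) = gser i k)
    -- `ρ ∈ ℝ₊[[t]]` with constant term 1 majorizes all normalized differences
    (hρ0 : ρ 0 = 1) (hρpos : ∀ k, 0 ≤ ρ k)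
    (hρmaj : ∀ i j : Fin N, i < j → ∀ k, ‖q i k - q j k‖ ≤ ‖q i 0 - q j 0‖ * ρ k)
    -- `P = (2 − ρ²)^{−3/2}` as a formal power series
    (hP : IsFPow (fun k => if k = 0 then 1 else -(cauchy ρ ρ k)) P (-(3 / 2))) :
    ∀ i, ∀ k, ‖gser i k‖ ≤ Kcoef G m (fun i => q i 0) i * cauchy ρ P k := by
  -- majorization of every normalized difference, for all pairs i ≠ j
  have hmaj : ∀ i j : Fin N, i ≠ j → ∀ k,
      ‖q i k - q j k‖ ≤ ‖q i 0 - q j 0‖ * ρ k := by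
    intro i j hij k
    rcases lt_or_gt_of_ne hij with hlt | hgt
    · exact hρmaj i j hlt k
    · rw [norm_sub_rev (q i k), norm_sub_rev (q i 0)]
      exact hρmaj j i hgt k
  -- |w i j k| ≤ P k
  have hwmaj : ∀ i j : Fin N, i ≠ j → ∀ k, |w i j k| ≤ P k ∧ 0 ≤ P k := by
    intro i j hij
    have hd0 : (0:ℝ) < ‖q i 0 - q j 0‖ := by
      rw [norm_pos_iff, sub_ne_zero]; exact hsep i j hij
    refine pow_maj _ _ _ _ (hw i j hij) hP ?_
    intro k hk
    simp only [if_neg (by omega : ¬ k = 0), neg_neg]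
    rw [abs_div, abs_of_nonneg (by positivity : (0:ℝ) ≤ ‖q i 0 - q j 0‖ ^ 2),
      div_le_iff₀ (by positivity)]
    calc |∑ a ∈ Finset.range (k + 1), ⟪q i a - q j a, q i (k - a) - q j (k - a)⟫|
        ≤ ∑ a ∈ Finset.range (k + 1),
            ‖q i a - q j a‖ * ‖q i (k - a) - q j (k - a)‖ := by
          refine (Finset.abs_sum_le_sum_abs _ _).trans ?_
          exact Finset.sum_le_sum fun a _ => abs_real_inner_le_norm _ _
      _ ≤ ∑ a ∈ Finset.range (k + 1),
            (‖q i 0 - q j 0‖ * ρ a) * (‖q i 0 - q j 0‖ * ρ (k - a)) := by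
          refine Finset.sum_le_sum fun a _ => ?_
          exact mul_le_mul (hmaj i j hij a) (hmaj i j hij (k - a)) (norm_nonneg _)
            (mul_nonneg (norm_nonneg _) (hρpos a))
      _ = cauchy ρ ρ k * ‖q i 0 - q j 0‖ ^ 2 := by
          unfold cauchy
          rw [Finset.sum_mul]
          exact Finset.sum_congr rfl fun a _ => by ring
  intro i k
  rw [hgser i k]
  have step : ∀ j ∈ Finset.univ.erase i,
      ‖(G * m j / ‖q i 0 - q j 0‖ ^ 3) •
        (∑ a ∈ Finset.range (k + 1), w i j a • (q j (k - a) - q i (k - a)))‖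
      ≤ (G * m j / ‖q i 0 - q j 0‖ ^ 2) * cauchy P ρ k := by
    intro j hj
    have hij : i ≠ j := (Finset.ne_of_mem_erase hj).symm
    have hd0 : (0:ℝ) < ‖q i 0 - q j 0‖ := by
      rw [norm_pos_iff, sub_ne_zero]; exact hsep i j hij
    have hc : (0:ℝ) ≤ G * m j / ‖q i 0 - q j 0‖ ^ 3 := by
      have := (hm j).le
      positivity
    rw [norm_smul, Real.norm_eq_abs, abs_of_nonneg hc]
    have hsum : ‖∑ a ∈ Finset.range (k + 1), w i j a • (q j (k - a) - q i (k - a))‖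
        ≤ ‖q i 0 - q j 0‖ * cauchy P ρ k := by
      calc ‖∑ a ∈ Finset.range (k + 1), w i j a • (q j (k - a) - q i (k - a))‖
          ≤ ∑ a ∈ Finset.range (k + 1), ‖w i j a • (q j (k - a) - q i (k - a))‖ :=
            norm_sum_le _ _
        _ ≤ ∑ a ∈ Finset.range (k + 1), P a * (‖q i 0 - q j 0‖ * ρ (k - a)) := by
            refine Finset.sum_le_sum fun a _ => ?_
            rw [norm_smul, Real.norm_eq_abs]
            refine mul_le_mul (hwmaj i j hij a).1 ?_ (norm_nonneg _)
              (hwmaj i j hij a).2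
            rw [norm_sub_rev]
            exact hmaj i j hij (k - a)
        _ = ‖q i 0 - q j 0‖ * cauchy P ρ k := by
            unfold cauchy
            rw [Finset.mul_sum]
            exact Finset.sum_congr rfl fun a _ => by ring
    calc (G * m j / ‖q i 0 - q j 0‖ ^ 3) *
          ‖∑ a ∈ Finset.range (k + 1), w i j a • (q j (k - a) - q i (k - a))‖
        ≤ (G * m j / ‖q i 0 - q j 0‖ ^ 3) * (‖q i 0 - q j 0‖ * cauchy P ρ k) :=
          mul_le_mul_of_nonneg_left hsum hc
      _ = (G * m j / ‖q i 0 - q j 0‖ ^ 2) * cauchy P ρ k := by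
          field_simp
  calc ‖∑ j ∈ Finset.univ.erase i, (G * m j / ‖q i 0 - q j 0‖ ^ 3) •
        (∑ a ∈ Finset.range (k + 1), w i j a • (q j (k - a) - q i (k - a)))‖
      ≤ ∑ j ∈ Finset.univ.erase i, ‖(G * m j / ‖q i 0 - q j 0‖ ^ 3) •
        (∑ a ∈ Finset.range (k + 1), w i j a • (q j (k - a) - q i (k - a)))‖ :=
        norm_sum_le _ _
    _ ≤ ∑ j ∈ Finset.univ.erase i, (G * m j / ‖q i 0 - q j 0‖ ^ 2) * cauchy P ρ k :=
        Finset.sum_le_sum step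
    _ = Kcoef G m (fun i => q i 0) i * cauchy ρ P k := by
        rw [Kcoef, Finset.sum_mul, cauchy_comm ρ P]

end
end

section
/- Majorant for the N-body solution (Theorem 3.3, first part): The formal power series solution (q, v) of the N-body equations with regular initial data satisfies q_i − q_j ⊴ ‖q_i⁰ − q_j⁰‖·ρ for all 1 ≤ i < j ≤ N, where ρ ∈ ℝ₊[[t]] is the unique formal power series solution of ρ'' = ν(q⁰)·ρ·(2 − ρ²)^{−3/2}, ρ(0) = 1, ρ'(0) = μ(q⁰, v⁰), and all coefficients of ρ are nonnegative. -/
open scoped RealInnerProductSpace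
open Finset

noncomputable section

lemma fpow_nonneg {h P : ℕ → ℝ} (hP : IsFPow h P (-(3/2))) :
    ∀ k, (∀ j, 1 ≤ j → j ≤ k → h j ≤ 0) → 0 ≤ P k := by
  intro k
  induction k using Nat.strong_induction_on with
  | _ k IH =>
    intro hh
    rcases Nat.eq_zero_or_pos k with rfl | hk
    · rw [hP.1]; norm_num
    · rw [hP.2 k hk]
      apply mul_nonneg (by positivity)
      apply Finset.sum_nonneg
      intro j hj
      rw [Finset.mem_range] at hj
      have h1 : 1 ≤ k - j := by omega
      have hc : (((k - j : ℕ) : ℝ)) * (-(3/2)) - (j : ℝ) ≤ 0 := by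
        have h2 : (1:ℝ) ≤ ((k - j : ℕ):ℝ) := by exact_mod_cast h1
        nlinarith [Nat.cast_nonneg (α := ℝ) j]
      have hh' : h (k - j) ≤ 0 := hh _ h1 (by omega)
      have hPj : 0 ≤ P j := IH j hj (fun a ha1 ha2 => hh a ha1 (by omega))
      exact mul_nonneg (by nlinarith) hPj

lemma fpow_dom {g h p P : ℕ → ℝ} (hp : IsFPow g p (-(3/2))) (hP : IsFPow h P (-(3/2))) :
    ∀ k, (∀ j, 1 ≤ j → j ≤ k → |g j| ≤ -h j) → (∀ j, j ≤ k → 0 ≤ P j) → |p k| ≤ P k := by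
  intro k
  induction k using Nat.strong_induction_on with
  | _ k IH =>
    intro hgh hPn
    rcases Nat.eq_zero_or_pos k with rfl | hk
    · rw [hp.1, hP.1]; norm_num
    · rw [hp.2 k hk, hP.2 k hk]
      rw [abs_mul, abs_of_nonneg (a := 1/(k:ℝ)) (by positivity)]
      apply mul_le_mul_of_nonneg_left ?_ (by positivity)
      refine (Finset.abs_sum_le_sum_abs _ _).trans ?_
      apply Finset.sum_le_sum
      intro j hj
      rw [Finset.mem_range] at hj
      have h1 : 1 ≤ k - j := by omega
      set c : ℝ := (((k - j : ℕ) : ℝ)) * (-(3/2)) - (j : ℝ) with hcdef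
      have hc : c ≤ 0 := by
        have h2 : (1:ℝ) ≤ ((k - j : ℕ):ℝ) := by exact_mod_cast h1
        rw [hcdef]; nlinarith [Nat.cast_nonneg (α := ℝ) j]
      have hgj : |g (k - j)| ≤ -h (k - j) := hgh _ h1 (by omega)
      have hpj : |p j| ≤ P j := IH j hj (fun a ha1 ha2 => hgh a ha1 (by omega))
        (fun a ha => hPn a (by omega))
      have hPj : 0 ≤ P j := hPn j (by omega)
      calc |c * g (k - j) * p j| = |c| * (|g (k-j)| * |p j|) := by
            rw [abs_mul, abs_mul, mul_assoc]
        _ ≤ (-c) * ((-h (k-j)) * P j) := by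
            rw [abs_of_nonpos hc]
            apply mul_le_mul_of_nonneg_left ?_ (by linarith)
            exact mul_le_mul hgj hpj (abs_nonneg _) (le_trans (abs_nonneg _) hgj)
        _ = c * h (k-j) * P j := by ring

/-- Majorant for the N-body solution (Theorem 3.3, first part): the formal power series
solution `(q, v)` of the N-body equations with regular initial data satisfies
`q_i − q_j ⊴ ‖q_i⁰ − q_j⁰‖ ρ` for all `i < j`, where `ρ` is the unique formal power
series solution of `ρ'' = ν(q⁰) ρ (2 − ρ²)^{−3/2}`, `ρ(0) = 1`, `ρ'(0) = μ(q⁰,v⁰)`,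
and all coefficients of `ρ` are nonnegative. `P = (2 − ρ²)^{−3/2}` formally. -/
theorem majorant_nbody_solution {N : ℕ} (G : ℝ) (m : Fin N → ℝ)
    (q v gser : Fin N → ℕ → EuclideanSpace ℝ (Fin 3))
    (w : Fin N → Fin N → ℕ → ℝ) (ρ P : ℕ → ℝ) (μ0 ν0 : ℝ)
    (hG : 0 < G) (hm : ∀ j, 0 < m j)
    (hsep : ∀ i j : Fin N, i ≠ j → q i 0 ≠ q j 0)
    -- `w i j = (‖q_i − q_j‖²/‖q_i⁰ − q_j⁰‖²)^{−3/2}` as a formal power series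
    (hw : ∀ i j : Fin N, i ≠ j →
      IsFPow (fun k =>
        (∑ a ∈ Finset.range (k + 1),
          ⟪q i a - q j a, q i (k - a) - q j (k - a)⟫) / ‖q i 0 - q j 0‖ ^ 2)
        (w i j) (-(3 / 2)))
    -- `gser i` is the coefficient series of `g_i(q)`
    (hgser : ∀ i k, gser i k =
      ∑ j ∈ Finset.univ.erase i, (G * m j / ‖q i 0 - q j 0‖ ^ 3) •
        (∑ a ∈ Finset.range (k + 1), w i j a • (q j (k - a) - q i (k - a))))
    -- `(q, v)` is the formal power series solution of the N-body equations
    (hODEq : ∀ i, ∀ k : ℕ, ((k : ℝ) + 1) • q i (k + 1 : ℕ) = v i k)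
    (hODEv : ∀ i, ∀ k : ℕ, ((k : ℝ) + 1) • v i (k + 1 : ℕ) = gser i k)
    -- `μ0 = μ(q⁰,v⁰) = max_{i<j} ‖v_i⁰ − v_j⁰‖/‖q_i⁰ − q_j⁰‖`
    (hμ0ub : ∀ i j : Fin N, i < j → ‖v i 0 - v j 0‖ / ‖q i 0 - q j 0‖ ≤ μ0)
    (hμ0mem : ∃ i j : Fin N, i < j ∧ μ0 = ‖v i 0 - v j 0‖ / ‖q i 0 - q j 0‖)
    -- `ν0 = ν(q⁰) = max_{i<j} (K_i(q⁰)+K_j(q⁰))/‖q_i⁰ − q_j⁰‖`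
    (hν0ub : ∀ i j : Fin N, i < j →
      (Kcoef G m (fun l => q l 0) i + Kcoef G m (fun l => q l 0) j) / ‖q i 0 - q j 0‖ ≤ ν0)
    (hν0mem : ∃ i j : Fin N, i < j ∧
      ν0 = (Kcoef G m (fun l => q l 0) i + Kcoef G m (fun l => q l 0) j) / ‖q i 0 - q j 0‖)
    -- `P = (2 − ρ²)^{−3/2}` as a formal power series
    (hP : IsFPow (fun k => if k = 0 then 1 else -(cauchy ρ ρ k)) P (-(3 / 2)))
    -- `ρ` solves `ρ'' = ν0 ρ (2 − ρ²)^{−3/2}`, `ρ(0) = 1`, `ρ'(0) = μ0`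
    (hρ0 : ρ 0 = 1) (hρ1 : ρ 1 = μ0)
    (hρrec : ∀ k : ℕ,
      (((k : ℝ) + 2) * ((k : ℝ) + 1)) * ρ (k + 2 : ℕ) = ν0 * cauchy ρ P k) :
    (∀ k, 0 ≤ ρ k) ∧
      ∀ i j : Fin N, i < j → ∀ k, ‖q i k - q j k‖ ≤ ‖q i 0 - q j 0‖ * ρ k := by
  have hr : ∀ i j : Fin N, i ≠ j → 0 < ‖q i 0 - q j 0‖ := fun i j h =>
    norm_sub_pos_iff.2 (hsep i j h)
  have hμ0 : 0 ≤ μ0 := by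
    obtain ⟨i, j, hij, h⟩ := hμ0mem
    rw [h]; positivity
  have hK : ∀ i, 0 ≤ Kcoef G m (fun l => q l 0) i := by
    intro i
    apply Finset.sum_nonneg
    intro j hj
    exact div_nonneg (mul_nonneg hG.le (hm j).le) (by positivity)
  have hν0 : 0 ≤ ν0 := by
    obtain ⟨i, j, hij, h⟩ := hν0mem
    rw [h]
    exact div_nonneg (by linarith [hK i, hK j]) (norm_nonneg _)
  -- nonnegativity of ρ and P
  have hnn : ∀ k, 0 ≤ ρ k ∧ 0 ≤ P k := by
    intro k
    induction k using Nat.strong_induction_on with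
    | _ k IH =>
      have hρk : 0 ≤ ρ k := by
        rcases Nat.lt_or_ge k 2 with h2 | h2
        · interval_cases k
          · rw [hρ0]; norm_num
          · rw [hρ1]; exact hμ0
        · obtain ⟨n, rfl⟩ : ∃ n, k = n + 2 := ⟨k - 2, by omega⟩
          have hrec := hρrec n
          have hc : 0 ≤ cauchy ρ P n := by
            apply Finset.sum_nonneg
            intro j hj
            rw [Finset.mem_range] at hj
            exact mul_nonneg (IH j (by omega)).1 (IH (n - j) (by omega)).2
          have hcpos : (0:ℝ) < ((n:ℝ)+2)*((n:ℝ)+1) := by positivity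
          nlinarith [mul_nonneg hν0 hc]
      refine ⟨hρk, ?_⟩
      apply fpow_nonneg hP k
      intro j hj1 hjk
      have hρle : ∀ b, b ≤ k → 0 ≤ ρ b := by
        intro b hb
        rcases eq_or_lt_of_le hb with rfl | hb
        · exact hρk
        · exact (IH b hb).1
      simp only [if_neg (by omega : ¬ j = 0)]
      have hc : 0 ≤ cauchy ρ ρ j := by
        apply Finset.sum_nonneg
        intro a ha
        rw [Finset.mem_range] at ha
        exact mul_nonneg (hρle a (by omega)) (hρle (j - a) (by omega))
      linarith
  -- the main coefficientwise bound
  have main : ∀ k, ∀ i j : Fin N, i ≠ j → ‖q i k - q j k‖ ≤ ‖q i 0 - q j 0‖ * ρ k := by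
    intro k
    induction k using Nat.strong_induction_on with
    | _ k IH =>
      intro i j hij
      rcases Nat.lt_or_ge k 2 with h2 | h2
      · interval_cases k
        · rw [hρ0, mul_one]
        · have hq1 : ∀ l, q l 1 = v l 0 := by
            intro l
            have h := hODEq l 0
            simpa using h
          rw [hq1 i, hq1 j, hρ1]
          rcases hij.lt_or_gt with h | h
          · have h' := hμ0ub i j h
            rw [div_le_iff₀ (hr i j hij)] at h'
            linarith
          · have h' := hμ0ub j i h
            rw [div_le_iff₀ (hr j i hij.symm)] at h'
            rw [norm_sub_rev (v i 0), norm_sub_rev (q i 0)]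
            linarith
      · obtain ⟨n, rfl⟩ : ∃ n, k = n + 2 := ⟨k - 2, by omega⟩
        -- w is dominated by P
        have hwle : ∀ i0 l : Fin N, i0 ≠ l → ∀ a, a ≤ n → |w i0 l a| ≤ P a := by
          intro i0 l hil a ha
          apply fpow_dom (hw i0 l hil) hP a
          · intro b hb1 hba
            simp only [if_neg (by omega : ¬ b = 0), neg_neg]
            have hrpos : (0:ℝ) < ‖q i0 0 - q l 0‖ ^ 2 := pow_pos (hr i0 l hil) 2
            rw [abs_div, abs_of_nonneg hrpos.le, div_le_iff₀ hrpos]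
            calc |∑ c ∈ Finset.range (b + 1),
                  ⟪q i0 c - q l c, q i0 (b - c) - q l (b - c)⟫|
                ≤ ∑ c ∈ Finset.range (b + 1),
                  |⟪q i0 c - q l c, q i0 (b - c) - q l (b - c)⟫| :=
                  Finset.abs_sum_le_sum_abs _ _
              _ ≤ ∑ c ∈ Finset.range (b + 1),
                  (‖q i0 0 - q l 0‖ * ρ c) * (‖q i0 0 - q l 0‖ * ρ (b - c)) := by
                  apply Finset.sum_le_sum
                  intro c hc
                  rw [Finset.mem_range] at hc
                  refine (abs_real_inner_le_norm _ _).trans ?_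
                  have hb1' := IH c (by omega) i0 l hil
                  have hb2' := IH (b - c) (by omega) i0 l hil
                  exact mul_le_mul hb1' hb2' (norm_nonneg _)
                    (mul_nonneg (norm_nonneg _) (hnn c).1)
              _ = cauchy ρ ρ b * ‖q i0 0 - q l 0‖ ^ 2 := by
                  rw [cauchy, Finset.sum_mul]
                  apply Finset.sum_congr rfl
                  intro c hc
                  ring
          · intro b hb
            exact (hnn b).2
        -- coefficient extraction for q at n+2
        have key : ∀ l, q l (n+2) = ((((n:ℝ)+2) * ((n:ℝ)+1))⁻¹) • gser l n := by
          intro l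
          have h1 := hODEq l (n+1)
          have h2 := hODEv l n
          have hne1 : ((n:ℝ)+1) ≠ 0 := by positivity
          have hne2 : (((n+1:ℕ)):ℝ) + 1 ≠ 0 := by positivity
          have e1 : q l (n+2) = ((((n+1:ℕ)):ℝ) + 1)⁻¹ • v l (n+1) := by
            rw [← h1, inv_smul_smul₀ hne2]
          have e2 : v l (n+1) = (((n:ℝ)) + 1)⁻¹ • gser l n := by
            rw [← h2, inv_smul_smul₀ hne1]
          rw [e1, e2, smul_smul]
          congr 1
          have h3 : (((n+1:ℕ)):ℝ) + 1 = (n:ℝ) + 2 := by push_cast; ring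
          rw [h3, mul_inv]
        -- bound for each gser
        have hgb : ∀ i0 : Fin N, ‖gser i0 n‖ ≤
            Kcoef G m (fun l => q l 0) i0 * (∑ a ∈ Finset.range (n+1), P a * ρ (n - a)) := by
          intro i0
          rw [hgser i0 n]
          refine (norm_sum_le _ _).trans ?_
          rw [Kcoef, Finset.sum_mul]
          apply Finset.sum_le_sum
          intro l hl
          have hli : i0 ≠ l := (Finset.ne_of_mem_erase hl).symm
          have hrpos := hr i0 l hli
          have hcoef : (0:ℝ) ≤ G * m l / ‖q i0 0 - q l 0‖ ^ 3 :=
            div_nonneg (mul_nonneg hG.le (hm l).le) (by positivity)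
          rw [norm_smul, Real.norm_eq_abs, abs_of_nonneg hcoef]
          have hinner : ‖∑ a ∈ Finset.range (n+1), w i0 l a • (q l (n-a) - q i0 (n-a))‖ ≤
              ‖q i0 0 - q l 0‖ * (∑ a ∈ Finset.range (n+1), P a * ρ (n - a)) := by
            refine (norm_sum_le _ _).trans ?_
            rw [Finset.mul_sum]
            apply Finset.sum_le_sum
            intro a ha
            rw [Finset.mem_range] at ha
            rw [norm_smul, Real.norm_eq_abs]
            have h1 : |w i0 l a| ≤ P a := hwle i0 l hli a (by omega)
            have h2 : ‖q l (n-a) - q i0 (n-a)‖ ≤ ‖q i0 0 - q l 0‖ * ρ (n-a) := by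
              rw [norm_sub_rev]
              exact IH (n - a) (by omega) i0 l hli
            calc |w i0 l a| * ‖q l (n-a) - q i0 (n-a)‖
                ≤ P a * (‖q i0 0 - q l 0‖ * ρ (n-a)) :=
                  mul_le_mul h1 h2 (norm_nonneg _) (hnn a).2
              _ = ‖q i0 0 - q l 0‖ * (P a * ρ (n - a)) := by ring
          refine le_trans (mul_le_mul_of_nonneg_left hinner hcoef) ?_
          have hne : ‖q i0 0 - q l 0‖ ≠ 0 := hrpos.ne'
          have heq : G * m l / ‖q i0 0 - q l 0‖ ^ 3 *
              (‖q i0 0 - q l 0‖ * (∑ a ∈ Finset.range (n+1), P a * ρ (n - a))) =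
              G * m l / ‖q i0 0 - q l 0‖ ^ 2 *
              (∑ a ∈ Finset.range (n+1), P a * ρ (n - a)) := by
            field_simp
          rw [heq]
        -- the reflected sum equals the Cauchy product
        have hCeq : ∑ a ∈ Finset.range (n+1), P a * ρ (n - a) = cauchy ρ P n := by
          rw [cauchy, ← Finset.sum_range_reflect (fun j => ρ j * P (n - j)) (n+1)]
          apply Finset.sum_congr rfl
          intro a ha
          rw [Finset.mem_range] at ha
          have h1 : n + 1 - 1 - a = n - a := by omega
          have h2 : n - (n - a) = a := by omega
          simp only [h1, h2]
          ring
        have hCnn : 0 ≤ cauchy ρ P n := by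
          apply Finset.sum_nonneg
          intro a ha
          rw [Finset.mem_range] at ha
          exact mul_nonneg (hnn a).1 (hnn (n - a)).2
        -- combine
        have hKν : Kcoef G m (fun l => q l 0) i + Kcoef G m (fun l => q l 0) j ≤
            ν0 * ‖q i 0 - q j 0‖ := by
          rcases hij.lt_or_gt with h | h
          · have h' := hν0ub i j h
            rw [div_le_iff₀ (hr i j hij)] at h'
            linarith
          · have h' := hν0ub j i h
            rw [div_le_iff₀ (hr j i hij.symm)] at h'
            rw [norm_sub_rev (q i 0)]
            linarith
        have hgd : ‖gser i n - gser j n‖ ≤ ν0 * ‖q i 0 - q j 0‖ * cauchy ρ P n := by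
          calc ‖gser i n - gser j n‖ ≤ ‖gser i n‖ + ‖gser j n‖ := norm_sub_le _ _
            _ ≤ (Kcoef G m (fun l => q l 0) i + Kcoef G m (fun l => q l 0) j) *
                (∑ a ∈ Finset.range (n+1), P a * ρ (n - a)) := by
                have := hgb i
                have := hgb j
                nlinarith [hgb i, hgb j]
            _ = (Kcoef G m (fun l => q l 0) i + Kcoef G m (fun l => q l 0) j) *
                cauchy ρ P n := by rw [hCeq]
            _ ≤ ν0 * ‖q i 0 - q j 0‖ * cauchy ρ P n :=
                mul_le_mul_of_nonneg_right hKν hCnn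
        have hqe : q i (n+2) - q j (n+2) =
            ((((n:ℝ)+2) * ((n:ℝ)+1))⁻¹) • (gser i n - gser j n) := by
          rw [key i, key j, smul_sub]
        have hcpos : (0:ℝ) < ((n:ℝ)+2)*((n:ℝ)+1) := by positivity
        have hqnorm : ‖q i (n+2) - q j (n+2)‖ =
            ((((n:ℝ)+2) * ((n:ℝ)+1))⁻¹) * ‖gser i n - gser j n‖ := by
          rw [hqe, norm_smul, Real.norm_eq_abs, abs_of_nonneg (by positivity)]
        rw [hqnorm, inv_mul_le_iff₀ hcpos]
        calc ‖gser i n - gser j n‖ ≤ ν0 * ‖q i 0 - q j 0‖ * cauchy ρ P n := hgd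
          _ = ((n:ℝ)+2)*((n:ℝ)+1) * (‖q i 0 - q j 0‖ * ρ (n+2)) := by
              linear_combination (-(‖q i 0 - q j 0‖)) * (hρrec n)
  exact ⟨fun k => (hnn k).1, fun i j hij k => main k i j (ne_of_lt hij)⟩


end
end

section
/- Algebraic relation between the discrete majorant series (Remark after Theorem 5.2): the fixed-point power series (ξ̂, ζ̂) ∈ (1 + τℝ[[τ]]) × τℝ[[τ]] of the midpoint majorant operator Ψ̂, i.e. the unique solution of ξ̂ = 1 + (τ/2)(2 − χ(ξ̂,ζ̂))^{−1/2}(1 + ζ̂) and ζ̂ = (τ/2)(2 − χ(ξ̂,ζ̂))^{−1/2} ξ̂ (2 − ξ̂²)^{−3/2}, satisfies ζ̂ = (1/2)((1 − 4ξ̂(1 − ξ̂)(2 − ξ̂²)^{−3/2})^{1/2} − 1) as formal power series in τ. -/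
noncomputable section

/-- The constant power series `1`. -/
def one' (k : ℕ) : ℝ := if k = 0 then 1 else 0

open PowerSeries

def F (a : ℕ → ℝ) : PowerSeries ℝ := PowerSeries.mk a

lemma coeff_F (a : ℕ → ℝ) (k : ℕ) : coeff (R := ℝ) k (F a) = a k := coeff_mk k a

lemma coeff_F_mul (a b : ℕ → ℝ) (k : ℕ) : coeff (R := ℝ) k (F a * F b) = cauchy a b k := by
  rw [coeff_mul, Finset.Nat.sum_antidiagonal_eq_sum_range_succ_mk]
  simp [coeff_F, cauchy]

lemma F_mul (a b : ℕ → ℝ) : F (cauchy a b) = F a * F b := by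
  ext k; rw [coeff_F, coeff_F_mul]

lemma coeff_one'' (k : ℕ) : coeff (R := ℝ) k (1 : PowerSeries ℝ) = one' k := by
  rw [coeff_one]; rfl

lemma coeff_two_mul' (f : PowerSeries ℝ) (k : ℕ) :
    coeff (R := ℝ) k (2 * f) = 2 * coeff (R := ℝ) k f := by
  rw [← map_ofNat (PowerSeries.C (R := ℝ)) 2, coeff_C_mul]

lemma coeff_four_mul' (f : PowerSeries ℝ) (k : ℕ) :
    coeff (R := ℝ) k (4 * f) = 4 * coeff (R := ℝ) k f := by
  rw [← map_ofNat (PowerSeries.C (R := ℝ)) 4, coeff_C_mul]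

def theta (f : PowerSeries ℝ) : PowerSeries ℝ := X * derivativeFun f

lemma theta_F (a : ℕ → ℝ) : theta (F a) = F (fun k => (k : ℝ) * a k) := by
  ext k
  cases k with
  | zero =>
    rw [coeff_F]
    simp [theta]
  | succ n =>
    rw [coeff_F]
    rw [theta, coeff_succ_X_mul,
      show derivativeFun (F a) = derivative ℝ (F a) from rfl, coeff_derivative, coeff_F]
    push_cast; ring

lemma theta_sq (f : PowerSeries ℝ) : theta (f ^ 2) = 2 * f * theta f := by
  simp only [theta, pow_two, derivativeFun_mul, smul_eq_mul]
  ring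

/-- uniqueness of the `IsFPow` solution -/
lemma isFPow_unique (g p q : ℕ → ℝ) (ν : ℝ) (hp : IsFPow g p ν) (hq : IsFPow g q ν) :
    ∀ k, p k = q k := by
  intro k
  induction k using Nat.strong_induction_on with
  | _ k ih =>
    cases k with
    | zero => rw [hp.1, hq.1]
    | succ n =>
      rw [hp.2 (n+1) (Nat.le_add_left 1 n), hq.2 (n+1) (Nat.le_add_left 1 n)]
      congr 1
      apply Finset.sum_congr rfl
      intro j hj
      rw [ih j (Finset.mem_range.mp hj)]

/-- Algebraic relation between the discrete majorant series (Remark after Theorem 5.2):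
the fixed point `(ξ̂, ζ̂)` of the midpoint majorant operator `Ψ̂`, i.e. the solution of
`ξ̂ = 1 + (τ/2)(2 − χ(ξ̂,ζ̂))^{−1/2}(1 + ζ̂)` and
`ζ̂ = (τ/2)(2 − χ(ξ̂,ζ̂))^{−1/2} ξ̂ (2 − ξ̂²)^{−3/2}`, where
`χ(ξ,ζ) = (2 − ξ²)^{−1}(2ζ + ζ² + (2 − ξ²)^{−1/2})`, satisfies
`ζ̂ = (1/2)((1 − 4 ξ̂ (1 − ξ̂)(2 − ξ̂²)^{−3/2})^{1/2} − 1)` as formal power series in τ.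
Here `A = (2 − ξ̂²)^{−1}`, `B = (2 − ξ̂²)^{−1/2}`, `D = (2 − ξ̂²)^{−3/2}`,
`C = (2 − χ(ξ̂,ζ̂))^{−1/2}` and `S = (1 − 4 ξ̂ (1 − ξ̂)(2 − ξ̂²)^{−3/2})^{1/2}`,
all given as formal power series via `IsFPow`. -/
theorem midpoint_majorant_series_relation
    (ξ ζ A B C D S : ℕ → ℝ)
    (hξ0 : ξ 0 = 1) (hζ0 : ζ 0 = 0)
    (hA : IsFPow (fun k => if k = 0 then 1 else -(cauchy ξ ξ k)) A (-1))
    (hB : IsFPow (fun k => if k = 0 then 1 else -(cauchy ξ ξ k)) B (-(1 / 2)))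
    (hD : IsFPow (fun k => if k = 0 then 1 else -(cauchy ξ ξ k)) D (-(3 / 2)))
    (hC : IsFPow (fun k => if k = 0 then 1 else
        -(cauchy A (fun l => 2 * ζ l + cauchy ζ ζ l + B l) k)) C (-(1 / 2)))
    -- fixed point equations of Ψ̂ (multiplication by τ shifts coefficients)
    (hξfix : ∀ k : ℕ, ξ (k + 1 : ℕ) =
      (1 / 2) * cauchy C (fun l => one' l + ζ l) k)
    (hζfix : ∀ k : ℕ, ζ (k + 1 : ℕ) =
      (1 / 2) * cauchy C (cauchy ξ D) k)
    (hS : IsFPow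
      (fun k => one' k - 4 * cauchy (cauchy ξ (fun l => one' l - ξ l)) D k) S (1 / 2)) :
    ∀ k, ζ k = (1 / 2) * (S k - one' k) := by
  classical
  set gs : ℕ → ℝ := fun k => one' k - 4 * cauchy (cauchy ξ (fun l => one' l - ξ l)) D k
    with hgs
  set p : ℕ → ℝ := fun k => one' k + 2 * ζ k with hpdef
  -- power series versions
  have hone : F (fun l => one' l + ζ l) = 1 + F ζ := by
    ext k; rw [coeff_F, map_add, coeff_one'', coeff_F]
  have h1 : F ξ = 1 + X * (PowerSeries.C (R := ℝ) (2⁻¹) * (F C * (1 + F ζ))) := by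
    ext k
    cases k with
    | zero =>
      rw [coeff_F, map_add, coeff_one'',
        show X * (PowerSeries.C (R := ℝ) (2⁻¹) * (F C * (1 + F ζ)))
          = (PowerSeries.C (R := ℝ) (2⁻¹) * (F C * (1 + F ζ))) * X from mul_comm _ _,
        coeff_zero_mul_X, hξ0]
      simp [one']
    | succ n =>
      rw [coeff_F, hξfix n, map_add, coeff_one'', coeff_succ_X_mul, coeff_C_mul,
        ← hone, coeff_F_mul]
      simp [one']
  have h2 : F ζ = X * (PowerSeries.C (R := ℝ) (2⁻¹) * (F C * (F ξ * F D))) := by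
    ext k
    cases k with
    | zero =>
      rw [coeff_F,
        show X * (PowerSeries.C (R := ℝ) (2⁻¹) * (F C * (F ξ * F D)))
          = (PowerSeries.C (R := ℝ) (2⁻¹) * (F C * (F ξ * F D))) * X from mul_comm _ _,
        coeff_zero_mul_X, hζ0]
    | succ n =>
      rw [coeff_F, hζfix n, coeff_succ_X_mul, coeff_C_mul, ← F_mul, coeff_F_mul]
      ring
  -- key algebraic identity
  have hsub : F ξ - 1 = X * (PowerSeries.C (R := ℝ) (2⁻¹) * (F C * (1 + F ζ))) := by
    rw [h1]; ring
  have key : F ζ * (1 + F ζ) = (F ξ - 1) * (F ξ * F D) := by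
    calc F ζ * (1 + F ζ)
        = (X * (PowerSeries.C (R := ℝ) (2⁻¹) * (F C * (F ξ * F D)))) * (1 + F ζ) := by rw [← h2]
      _ = (X * (PowerSeries.C (R := ℝ) (2⁻¹) * (F C * (1 + F ζ)))) * (F ξ * F D) := by ring
      _ = (F ξ - 1) * (F ξ * F D) := by rw [← hsub]
  -- F gs = (F p)^2
  have hFp : F p = 1 + 2 * F ζ := by
    ext k
    rw [coeff_F, map_add, coeff_one'', coeff_two_mul', coeff_F]
  have hFgs : F gs = (F p) ^ 2 := by
    have e0 : F (fun l => one' l - ξ l) = 1 - F ξ := by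
      ext m; rw [coeff_F, map_sub, coeff_one'', coeff_F]
    have e1 : F (cauchy (cauchy ξ fun l => one' l - ξ l) D)
        = F ξ * (1 - F ξ) * F D := by
      rw [F_mul, F_mul, e0]
    have e2 : F gs = 1 - 4 * (F ξ * (1 - F ξ) * F D) := by
      ext m
      rw [coeff_F, map_sub, coeff_one'', coeff_four_mul', ← e1, coeff_F]
    rw [e2, hFp]
    have : (1 : PowerSeries ℝ) - 4 * (F ξ * (1 - F ξ) * F D)
        = 1 + 4 * ((F ξ - 1) * (F ξ * F D)) := by ring
    rw [this, ← key]
    ring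
  -- gs has constant term 1
  have hgs0 : gs 0 = 1 := by
    simp [hgs, one', cauchy, hξ0]
  -- p satisfies the IsFPow recurrence for gs with ν = 1/2
  have hp : IsFPow gs p (1/2) := by
    constructor
    · simp [hpdef, one', hζ0]
    · intro k hk
      have hth : theta (F p) * F gs = PowerSeries.C (R := ℝ) (2⁻¹) * (F p * theta (F gs)) := by
        rw [hFgs, theta_sq]
        have e3 : PowerSeries.C (R := ℝ) (2⁻¹) * (F p * (2 * F p * theta (F p)))
            = (PowerSeries.C (R := ℝ) (2⁻¹) * 2) * (F p ^ 2 * theta (F p)) := by ring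
        have e4 : (PowerSeries.C (R := ℝ) (2⁻¹) * 2 : PowerSeries ℝ) = 1 := by
          rw [← map_ofNat (PowerSeries.C (R := ℝ)) 2, ← map_mul]
          norm_num
        rw [e3, e4, one_mul]
        ring
      have hco := congrArg (coeff (R := ℝ) k) hth
      rw [theta_F, theta_F, coeff_C_mul, coeff_F_mul, coeff_F_mul] at hco
      unfold cauchy at hco
      rw [Finset.sum_range_succ, Finset.sum_range_succ] at hco
      simp only [Nat.sub_self, Nat.cast_zero, zero_mul, mul_zero, add_zero, hgs0, mul_one] at hco
      have hkne : (k : ℝ) ≠ 0 := Nat.cast_ne_zero.mpr (by omega)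
      have hstep : (k : ℝ) * p k
          = ∑ j ∈ Finset.range k, ((((k - j : ℕ) : ℝ)) * (1/2) - (j : ℝ)) * gs (k - j) * p j := by
        have expand : ∑ j ∈ Finset.range k,
            ((((k - j : ℕ) : ℝ)) * (1/2) - (j : ℝ)) * gs (k - j) * p j
            = 2⁻¹ * (∑ j ∈ Finset.range k, p j * (((k - j : ℕ) : ℝ) * gs (k - j)))
              - ∑ j ∈ Finset.range k, ((j : ℝ) * p j) * gs (k - j) := by
          rw [Finset.mul_sum, ← Finset.sum_sub_distrib]
          apply Finset.sum_congr rfl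
          intro j _
          ring
        rw [expand, ← hco]
        ring
      rw [← hstep]
      field_simp
  have hSp := isFPow_unique gs S p (1/2) hS hp
  intro k
  have h := hSp k
  simp only [hpdef] at h
  rw [h]
  ring

end
end
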